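/- Let X ⊂ P^5 be the Segre embedding of P^2 × P^1, let F_1 = s(P^2 × {a}) for a fixed a ∈ P^1, let l be a line in P^2 and F_2 = s(l × P^1), and let L = F_1 ∩ F_2, a line. Then the projection π_L : X ⇢ P^3 with center L is a birational map. -/

import Mathlib

open Projectivization Set

/-- `ℙ^(n-1)`-style projective space of the vector space `Fin n → k`. -/
abbrev Pk (k : Type*) [Field k] (n : ℕ) := Projectivization k (Fin n → k)

/-- Segre map on vectors. -/
def segV (k : Type*) [Field k] (x : Fin 3 → k) (y : Fin 2 → k) : Fin 6 → k :=
  fun i => x ⟨i.1 / 2, by have := i.2; omega⟩ * y ⟨i.1 % 2, by omega⟩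

theorem segV_ne_zero (k : Type*) [Field k] {x : Fin 3 → k} {y : Fin 2 → k}
    (hx : x ≠ 0) (hy : y ≠ 0) : segV k x y ≠ 0 := by
  obtain ⟨a, ha⟩ := Function.ne_iff.mp hx
  obtain ⟨b, hb⟩ := Function.ne_iff.mp hy
  intro h
  have ha2 := a.2
  have hb2 := b.2
  have h6 : 2 * a.1 + b.1 < 6 := by omega
  have hkey := congrFun h ⟨2 * a.1 + b.1, h6⟩
  simp only [segV, Pi.zero_apply] at hkey
  have e1 : (⟨(2 * a.1 + b.1) / 2, by omega⟩ : Fin 3) = a := Fin.ext (by simp; omega)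
  have e2 : (⟨(2 * a.1 + b.1) % 2, by omega⟩ : Fin 2) = b := Fin.ext (by simp; omega)
  rw [e1, e2] at hkey
  exact (mul_ne_zero ha hb) hkey

/-- The Segre embedding `s : ℙ² × ℙ¹ → ℙ⁵`. -/
noncomputable def segre (k : Type*) [Field k] (p : Pk k 3) (q : Pk k 2) : Pk k 6 :=
  Projectivization.mk k (segV k p.rep q.rep) (segV_ne_zero k p.rep_nonzero q.rep_nonzero)

/-- The Segre threefold `X = s(ℙ² × ℙ¹) ⊆ ℙ⁵`. -/
def SegreX (k : Type*) [Field k] : Set (Pk k 6) := {z | ∃ p q, z = segre k p q}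

/-- The set of points of projective space lying in a linear subspace `W`. -/
def projLin {k : Type*} [Field k] {n : ℕ} (W : Submodule k (Fin n → k)) : Set (Pk k n) :=
  {p | p.rep ∈ W}

/-- The plane `F₁ = s(ℙ² × {a})` of the ruling. -/
def F1set (k : Type*) [Field k] (a : Pk k 2) : Set (Pk k 6) := {z | ∃ p, z = segre k p a}
/-- The quadric surface `F₂ = s(l × ℙ¹)` for a line `l ⊆ ℙ²` (given by a 2-dimensional
vector subspace of `Fin 3 → k`). -/
def F2set (k : Type*) [Field k] (l : Submodule k (Fin 3 → k)) : Set (Pk k 6) :=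
  {z | ∃ p q, p.rep ∈ l ∧ z = segre k p q}

/-- The 2-dimensional vector subspace corresponding to the line `L = F₁ ∩ F₂ ⊆ ℙ⁵`. -/
def WL (k : Type*) [Field k] (l : Submodule k (Fin 3 → k)) (a : Pk k 2) :
    Submodule k (Fin 6 → k) :=
  Submodule.span k {v | ∃ x ∈ l, v = segV k x a.rep}

/-- A subset of projective space is (Zariski-)closed algebraic iff it is the common zero set
of a family of homogeneous polynomials. -/
def AlgSet {k : Type*} [Field k] {n : ℕ} (S : Set (Pk k n)) : Prop :=
  ∃ T : Set (MvPolynomial (Fin n) k), (∀ f ∈ T, ∃ d, f.IsHomogeneous d) ∧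
    S = {p | ∀ f ∈ T, MvPolynomial.eval p.rep f = 0}

/-- The linear projection `ℙ⁵ ⇢ ℙ³` induced by a linear map `π` (defined away from the
projectivization of `ker π`, junk value elsewhere). -/
noncomputable def projFrom (k : Type*) [Field k] (π : (Fin 6 → k) →ₗ[k] (Fin 4 → k))
    (p : Pk k 6) : Pk k 4 :=
  letI := Classical.propDecidable
  if h : π p.rep ≠ 0 then Projectivization.mk k (π p.rep) h
  else Projectivization.mk k (fun _ => 1) (fun h0 => one_ne_zero (congrFun h0 0))

section Aux
variable {k : Type*} [Field k]

lemma segV_add_left (x x' : Fin 3 → k) (y : Fin 2 → k) :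
    segV k (x + x') y = segV k x y + segV k x' y := by
  funext i; simp [segV, add_mul]

lemma segV_smul_left (c : k) (x : Fin 3 → k) (y : Fin 2 → k) :
    segV k (c • x) y = c • segV k x y := by
  funext i; simp [segV, mul_assoc]

lemma segV_add_right (x : Fin 3 → k) (y y' : Fin 2 → k) :
    segV k x (y + y') = segV k x y + segV k x y' := by
  funext i; simp [segV, mul_add]

lemma segV_smul_right (c : k) (x : Fin 3 → k) (y : Fin 2 → k) :
    segV k x (c • y) = c • segV k x y := by
  funext i; simp [segV]; ring

noncomputable def segL (k : Type*) [Field k] :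
    (Fin 3 → k) →ₗ[k] (Fin 2 → k) →ₗ[k] (Fin 6 → k) :=
  LinearMap.mk₂ k (segV k) segV_add_left segV_smul_left segV_add_right segV_smul_right

lemma segV_expand (X : Fin 3 → Fin 3 → k) (Y : Fin 2 → Fin 2 → k)
    (c : Fin 3 → k) (d : Fin 2 → k) :
    segV k (∑ i, c i • X i) (∑ j, d j • Y j)
      = ∑ p : Fin 3 × Fin 2, (c p.1 * d p.2) • segV k (X p.1) (Y p.2) := by
  have h : ∀ x y, segV k x y = segL k x y := fun _ _ => rfl
  simp only [h, map_sum, map_smul, LinearMap.sum_apply, LinearMap.smul_apply,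
    Fintype.sum_prod_type, smul_smul]
  simp only [Finset.smul_sum, smul_smul]
  rw [Finset.sum_comm]
  simp [mul_comm]

lemma exists_linear_poly {n : ℕ} (ψ : (Fin n → k) →ₗ[k] k) :
    ∃ f : MvPolynomial (Fin n) k, f.IsHomogeneous 1 ∧
      ∀ v : Fin n → k, MvPolynomial.eval v f = ψ v := by
  refine ⟨∑ i, MvPolynomial.C (ψ fun j => if i = j then 1 else 0) * MvPolynomial.X i, ?_, ?_⟩
  · apply MvPolynomial.IsHomogeneous.sum
    intro i _
    exact (MvPolynomial.isHomogeneous_X k i).C_mul _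
  · intro v
    rw [LinearMap.pi_apply_eq_sum_univ ψ v]
    simp [mul_comm]

lemma std_six (m : Fin 6) :
    (fun j => if m = j then (1:k) else 0)
      = segV k (fun r => if (⟨m.1/2, by have := m.2; omega⟩ : Fin 3) = r then 1 else 0)
          (fun s => if (⟨m.1%2, by omega⟩ : Fin 2) = s then 1 else 0) := by
  funext n
  simp only [segV]
  rcases eq_or_ne m n with rfl | h
  · simp
  · have h2 : m.1/2 ≠ n.1/2 ∨ m.1 % 2 ≠ n.1 % 2 := by
      by_contra hc; push_neg at hc
      have hm := m.2; have hn := n.2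
      exact h (Fin.ext (by omega))
    rcases h2 with h1 | h1 <;>
      simp [Fin.ext_iff, h, h1]

end Aux

/-- the projection π_L : X ⇢ ℙ³ of the Segre threefold X = s(ℙ² × ℙ¹) from the
line L = F₁ ∩ F₂ is birational: away from a proper closed algebraic subset of X it is a
bijection onto the complement of a proper closed algebraic subset of ℙ³. Here the projection
is induced by a surjective linear map π whose kernel is the 2-dimensional space of L. -/
theorem statement2 (k : Type*) [Field k] [IsAlgClosed k]
    (a : Pk k 2) (l : Submodule k (Fin 3 → k)) (hl : Module.finrank k l = 2)
    (π : (Fin 6 → k) →ₗ[k] (Fin 4 → k)) (hπ : Function.Surjective π)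
    (hker : LinearMap.ker π = WL k l a) :
    ∃ (Z : Set (Pk k 6)) (Z' : Set (Pk k 4)), AlgSet Z ∧ AlgSet Z' ∧
      (SegreX k \ Z).Nonempty ∧ Z' ≠ Set.univ ∧
      Set.BijOn (projFrom k π) (SegreX k \ Z) (Set.univ \ Z') := by
  classical
  have h6 : Module.finrank k (Fin 6 → k) = 6 := Module.finrank_fin_fun k
  have h3 : Module.finrank k (Fin 3 → k) = 3 := Module.finrank_fin_fun k
  have h2 : Module.finrank k (Fin 2 → k) = 2 := Module.finrank_fin_fun k
  have h4 : Module.finrank k (Fin 4 → k) = 4 := Module.finrank_fin_fun k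
  -- a basis of `l`, extended to a basis of `k³`
  let bl : Module.Basis (Fin 2) k l := Module.finBasisOfFinrankEq k l hl
  let X2 : Fin 2 → (Fin 3 → k) := fun i => (bl i : Fin 3 → k)
  have hX2mem : ∀ i, X2 i ∈ l := fun i => (bl i).2
  have hX2li : LinearIndependent k X2 := bl.linearIndependent.map' l.subtype l.ker_subtype
  have hX2span : Submodule.span k (Set.range X2) = l := by
    have hr : Set.range X2 = l.subtype '' Set.range bl := by
      rw [← Set.range_comp]; rfl
    rw [hr, ← Submodule.map_span, bl.span_eq, Submodule.map_top, Submodule.range_subtype]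
  have hlne : l ≠ ⊤ := by
    intro h
    rw [h, finrank_top, h3] at hl
    omega
  obtain ⟨x3, hx3⟩ : ∃ x3, x3 ∉ l := by
    by_contra h
    push_neg at h
    exact hlne (Submodule.eq_top_iff'.mpr h)
  set Xb : Fin 3 → (Fin 3 → k) := Fin.snoc X2 x3 with hXb
  have hXli : LinearIndependent k Xb :=
    linearIndependent_fin_snoc.mpr ⟨hX2li, by rw [hX2span]; exact hx3⟩
  let B1 : Module.Basis (Fin 3) k (Fin 3 → k) :=
    basisOfLinearIndependentOfCardEqFinrank hXli (by simp [h3])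
  have hB1 : ⇑B1 = Xb := coe_basisOfLinearIndependentOfCardEqFinrank _ _
  have hXb0 : Xb 0 ∈ l := by
    have : Xb 0 = X2 0 := by simp [hXb, Fin.snoc]
    rw [this]; exact hX2mem 0
  have hXb1 : Xb 1 ∈ l := by
    have : Xb 1 = X2 1 := by simp [hXb, Fin.snoc]
    rw [this]; exact hX2mem 1
  -- basis of k² starting with a.rep
  have hy1 : a.rep ≠ 0 := a.rep_nonzero
  have hspan1 : Submodule.span k {a.rep} ≠ ⊤ := by
    intro h
    have h1 : Module.finrank k (Submodule.span k {a.rep}) = 1 := finrank_span_singleton hy1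
    rw [h, finrank_top, h2] at h1
    omega
  obtain ⟨y2, hy2⟩ : ∃ y2, y2 ∉ Submodule.span k {a.rep} := by
    by_contra h
    push_neg at h
    exact hspan1 (Submodule.eq_top_iff'.mpr h)
  set Yb : Fin 2 → (Fin 2 → k) := Fin.snoc (fun _ : Fin 1 => a.rep) y2 with hYb
  have hYli : LinearIndependent k Yb :=
    linearIndependent_fin_snoc.mpr
      ⟨linearIndependent_unique_iff.mpr hy1, by simpa using hy2⟩
  let B2 : Module.Basis (Fin 2) k (Fin 2 → k) :=
    basisOfLinearIndependentOfCardEqFinrank hYli (by simp [h2])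
  have hB2 : ⇑B2 = Yb := coe_basisOfLinearIndependentOfCardEqFinrank _ _
  have hYb0 : Yb 0 = a.rep := by simp [hYb, Fin.snoc]
  -- tensor basis of k⁶
  set Wf : Fin 3 × Fin 2 → (Fin 6 → k) := fun p => segV k (Xb p.1) (Yb p.2) with hWf
  have hxy : ∀ (x : Fin 3 → k) (y : Fin 2 → k),
      segV k x y ∈ Submodule.span k (Set.range Wf) := by
    intro x y
    rw [← B1.sum_equivFun x, ← B2.sum_equivFun y]
    rw [segV_expand]
    apply Submodule.sum_mem
    intro p _
    apply Submodule.smul_mem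
    exact Submodule.subset_span ⟨p, by simp only [hWf, hB1, hB2]⟩
  have hWspan : ⊤ ≤ Submodule.span k (Set.range Wf) := by
    intro v _
    rw [pi_eq_sum_univ v]
    apply Submodule.sum_mem
    intro m _
    apply Submodule.smul_mem
    rw [std_six m]
    exact hxy _ _
  let BW : Module.Basis (Fin 3 × Fin 2) k (Fin 6 → k) :=
    basisOfTopLeSpanOfCardEqFinrank Wf hWspan (by simp [h6])
  have hBW : ⇑BW = Wf := coe_basisOfTopLeSpanOfCardEqFinrank _ _ _
  -- kernel facts
  have hker0 : π (Wf (0,0)) = 0 := by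
    have hm : Wf (0,0) ∈ WL k l a :=
      Submodule.subset_span ⟨Xb 0, hXb0, by simp only [hWf]; rw [hYb0]⟩
    rw [← hker] at hm
    exact LinearMap.mem_ker.mp hm
  have hker1 : π (Wf (1,0)) = 0 := by
    have hm : Wf (1,0) ∈ WL k l a :=
      Submodule.subset_span ⟨Xb 1, hXb1, by simp only [hWf]; rw [hYb0]⟩
    rw [← hker] at hm
    exact LinearMap.mem_ker.mp hm
  -- basis of k⁴
  set Uf : Fin 4 → (Fin 4 → k) := ![π (Wf (0,1)), π (Wf (1,1)), π (Wf (2,0)), π (Wf (2,1))] with hUf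
  have hUspan : ⊤ ≤ Submodule.span k (Set.range Uf) := by
    intro w _
    obtain ⟨v, rfl⟩ := hπ w
    rw [← BW.sum_equivFun v]
    rw [map_sum]
    apply Submodule.sum_mem
    rintro ⟨i, j⟩ _
    rw [map_smul]
    apply Submodule.smul_mem
    rw [hBW]
    fin_cases i <;> fin_cases j
    · show π (Wf (0,0)) ∈ _
      rw [hker0]; exact Submodule.zero_mem _
    · exact Submodule.subset_span ⟨0, rfl⟩
    · show π (Wf (1,0)) ∈ _
      rw [hker1]; exact Submodule.zero_mem _
    · exact Submodule.subset_span ⟨1, rfl⟩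
    · exact Submodule.subset_span ⟨2, rfl⟩
    · exact Submodule.subset_span ⟨3, rfl⟩
  let Bu : Module.Basis (Fin 4) k (Fin 4 → k) :=
    basisOfTopLeSpanOfCardEqFinrank Uf hUspan (by simp [h4])
  have hBu : ⇑Bu = Uf := coe_basisOfTopLeSpanOfCardEqFinrank _ _ _
  -- coordinates of segV in the basis BW
  have keyW : ∀ (x : Fin 3 → k) (y : Fin 2 → k),
      BW.equivFun (segV k x y) = fun p => B1.equivFun x p.1 * B2.equivFun y p.2 := by
    intro x y
    have hseg : segV k x y
        = BW.equivFun.symm (fun p => B1.equivFun x p.1 * B2.equivFun y p.2) := by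
      rw [Module.Basis.equivFun_symm_apply]
      conv_lhs => rw [← B1.sum_equivFun x, ← B2.sum_equivFun y]
      rw [segV_expand]
      refine Finset.sum_congr rfl fun p _ => ?_
      simp only [hBW, hB1, hB2, hWf]
    rw [hseg, LinearEquiv.apply_symm_apply]
  have keyU : ∀ (x : Fin 3 → k) (y : Fin 2 → k),
      π (segV k x y) = Bu.equivFun.symm
        ![B1.equivFun x 0 * B2.equivFun y 1, B1.equivFun x 1 * B2.equivFun y 1,
          B1.equivFun x 2 * B2.equivFun y 0, B1.equivFun x 2 * B2.equivFun y 1] := by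
    intro x y
    have h1 : segV k x y = ∑ p : Fin 3 × Fin 2,
        (B1.equivFun x p.1 * B2.equivFun y p.2) • Wf p := by
      rw [← LinearEquiv.symm_apply_apply BW.equivFun (segV k x y), keyW x y,
        Module.Basis.equivFun_symm_apply]
      simp only [hBW]
    rw [h1, map_sum, Module.Basis.equivFun_symm_apply]
    simp only [map_smul]
    rw [Fintype.sum_prod_type, Fin.sum_univ_three, Fin.sum_univ_four]
    simp only [Fin.sum_univ_two, hker0, hker1, smul_zero, add_zero, zero_add, hBu]
    rw [hUf]
    simp only [Matrix.cons_val_zero, Matrix.cons_val_one, Matrix.head_cons,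
      Matrix.cons_val_two, Matrix.tail_cons, Matrix.cons_val_three]
    abel
  -- the two polynomials
  obtain ⟨f0, hf0hom, hf0⟩ := exists_linear_poly
    ((LinearMap.proj ((2,1) : Fin 3 × Fin 2)).comp BW.equivFun.toLinearMap)
  have hf0' : ∀ v, MvPolynomial.eval v f0 = BW.equivFun v (2,1) := fun v => hf0 v
  obtain ⟨g0, hg0hom, hg0⟩ := exists_linear_poly
    ((LinearMap.proj (3 : Fin 4)).comp Bu.equivFun.toLinearMap)
  have hg0' : ∀ v, MvPolynomial.eval v g0 = Bu.equivFun v 3 := fun v => hg0 v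
  have hrep : ∀ (P : Pk k 3) (Q : Pk k 2), ∃ t : kˣ,
      (segre k P Q).rep = (t : k) • segV k P.rep Q.rep := by
    intro P Q
    obtain ⟨t, ht⟩ := exists_smul_eq_mk_rep k (segV k P.rep Q.rep)
      (segV_ne_zero k P.rep_nonzero Q.rep_nonzero)
    exact ⟨t, show (Projectivization.mk k (segV k P.rep Q.rep) _).rep = _ from ht.symm⟩
  have memZ : ∀ (P : Pk k 3) (Q : Pk k 2),
      (MvPolynomial.eval (segre k P Q).rep f0 = 0
        ↔ B1.equivFun P.rep 2 * B2.equivFun Q.rep 1 = 0) := by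
    intro P Q
    obtain ⟨t, ht⟩ := hrep P Q
    rw [hf0', ht, map_smul, keyW]
    simp [Pi.smul_apply, smul_eq_mul, mul_eq_zero, Units.ne_zero]
  refine ⟨{z | MvPolynomial.eval z.rep f0 = 0}, {q | MvPolynomial.eval q.rep g0 = 0},
    ⟨{f0}, fun f hf => ⟨1, by rw [Set.mem_singleton_iff] at hf; rw [hf]; exact hf0hom⟩,
      by ext z; simp⟩,
    ⟨{g0}, fun f hf => ⟨1, by rw [Set.mem_singleton_iff] at hf; rw [hf]; exact hg0hom⟩,
      by ext z; simp⟩, ?_, ?_, ?_, ?_, ?_⟩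
  · -- nonempty
    refine ⟨segre k (Projectivization.mk k (B1 2) (B1.ne_zero 2))
      (Projectivization.mk k (B2 1) (B2.ne_zero 1)), ⟨_, _, rfl⟩, ?_⟩
    intro h
    rw [Set.mem_setOf_eq, memZ] at h
    obtain ⟨s, hs⟩ := exists_smul_eq_mk_rep k (B1 2) (B1.ne_zero 2)
    obtain ⟨r, hr⟩ := exists_smul_eq_mk_rep k (B2 1) (B2.ne_zero 1)
    rw [← hs, ← hr] at h
    simp [Module.Basis.equivFun_self, Units.smul_def, Units.ne_zero] at h
  · -- Z' ≠ univ
    intro hcon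
    have hq : (Projectivization.mk k (Bu 3) (Bu.ne_zero 3))
        ∈ {q : Pk k 4 | MvPolynomial.eval q.rep g0 = 0} := by
      rw [hcon]; exact Set.mem_univ _
    obtain ⟨s, hs⟩ := exists_smul_eq_mk_rep k (Bu 3) (Bu.ne_zero 3)
    rw [Set.mem_setOf_eq, hg0', ← hs] at hq
    simp [Module.Basis.equivFun_self, Units.smul_def, Units.ne_zero] at hq
  · -- MapsTo
    rintro z ⟨⟨P, Q, rfl⟩, hzZ⟩
    simp only [Set.mem_setOf_eq] at hzZ
    rw [memZ] at hzZ
    obtain ⟨hc2, hd1⟩ := mul_ne_zero_iff.mp hzZ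
    obtain ⟨t, ht⟩ := hrep P Q
    have hcoord : Bu.equivFun (π (segre k P Q).rep)
        = (t : k) • ![B1.equivFun P.rep 0 * B2.equivFun Q.rep 1,
            B1.equivFun P.rep 1 * B2.equivFun Q.rep 1,
            B1.equivFun P.rep 2 * B2.equivFun Q.rep 0,
            B1.equivFun P.rep 2 * B2.equivFun Q.rep 1] := by
      rw [ht, map_smul, map_smul, keyU, LinearEquiv.apply_symm_apply]
    have h3v := congrFun hcoord 3
    simp only [Pi.smul_apply, smul_eq_mul, Matrix.cons_val_three, Matrix.tail_cons,
      Matrix.head_cons] at h3v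
    have hne : π (segre k P Q).rep ≠ 0 := by
      intro h0
      rw [h0] at h3v
      simp only [map_zero, Pi.zero_apply] at h3v
      exact (mul_ne_zero t.ne_zero (mul_ne_zero hc2 hd1)) h3v.symm
    refine ⟨Set.mem_univ _, ?_⟩
    intro hbad
    simp only [Set.mem_setOf_eq] at hbad
    have himg : projFrom k π (segre k P Q)
        = Projectivization.mk k (π (segre k P Q).rep) hne := by
      simp only [projFrom]
      rw [dif_pos hne]
    rw [himg] at hbad
    obtain ⟨s, hs⟩ := exists_smul_eq_mk_rep k (π (segre k P Q).rep) hne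
    rw [hg0', ← hs] at hbad
    simp only [Units.smul_def, map_smul, Pi.smul_apply, smul_eq_mul, h3v] at hbad
    exact (mul_ne_zero s.ne_zero (mul_ne_zero t.ne_zero (mul_ne_zero hc2 hd1))) hbad
  · -- InjOn
    rintro z ⟨⟨P, Q, rfl⟩, hzZ⟩ z' ⟨⟨P', Q', rfl⟩, hzZ'⟩ heq
    simp only [Set.mem_setOf_eq] at hzZ hzZ'
    rw [memZ] at hzZ hzZ'
    obtain ⟨hc2, hd1⟩ := mul_ne_zero_iff.mp hzZ
    obtain ⟨hc2', hd1'⟩ := mul_ne_zero_iff.mp hzZ'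
    obtain ⟨t, ht⟩ := hrep P Q
    obtain ⟨t', ht'⟩ := hrep P' Q'
    set c := B1.equivFun P.rep with hcdef
    set d := B2.equivFun Q.rep with hddef
    set c' := B1.equivFun P'.rep with hcdef'
    set d' := B2.equivFun Q'.rep with hddef'
    have hcoord : Bu.equivFun (π (segre k P Q).rep)
        = (t : k) • ![c 0 * d 1, c 1 * d 1, c 2 * d 0, c 2 * d 1] := by
      rw [ht, map_smul, keyU, map_smul, LinearEquiv.apply_symm_apply]
    have hcoord' : Bu.equivFun (π (segre k P' Q').rep)
        = (t' : k) • ![c' 0 * d' 1, c' 1 * d' 1, c' 2 * d' 0, c' 2 * d' 1] := by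
      rw [ht', map_smul, keyU, map_smul, LinearEquiv.apply_symm_apply]
    have hne : π (segre k P Q).rep ≠ 0 := by
      intro h0
      rw [h0, map_zero] at hcoord
      have h3v := congrFun hcoord 3
      simp only [Pi.zero_apply, Pi.smul_apply, smul_eq_mul, Matrix.cons_val_three,
        Matrix.tail_cons, Matrix.head_cons] at h3v
      exact (mul_ne_zero t.ne_zero (mul_ne_zero hc2 hd1)) h3v.symm
    have hne' : π (segre k P' Q').rep ≠ 0 := by
      intro h0
      rw [h0, map_zero] at hcoord'
      have h3v := congrFun hcoord' 3
      simp only [Pi.zero_apply, Pi.smul_apply, smul_eq_mul, Matrix.cons_val_three,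
        Matrix.tail_cons, Matrix.head_cons] at h3v
      exact (mul_ne_zero t'.ne_zero (mul_ne_zero hc2' hd1')) h3v.symm
    have himg : projFrom k π (segre k P Q)
        = Projectivization.mk k (π (segre k P Q).rep) hne := by
      simp only [projFrom]; rw [dif_pos hne]
    have himg' : projFrom k π (segre k P' Q')
        = Projectivization.mk k (π (segre k P' Q').rep) hne' := by
      simp only [projFrom]; rw [dif_pos hne']
    rw [himg, himg', Projectivization.mk_eq_mk_iff] at heq
    obtain ⟨s, hs⟩ := heq
    have hE := congrArg Bu.equivFun hs
    rw [Units.smul_def, map_smul, hcoord, hcoord'] at hE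
    have E0 := congrFun hE 0
    have E1 := congrFun hE 1
    have E2 := congrFun hE 2
    have E3 := congrFun hE 3
    simp only [Pi.smul_apply, smul_eq_mul, Matrix.cons_val_zero, Matrix.cons_val_one,
      Matrix.head_cons, Matrix.cons_val_two, Matrix.tail_cons, Matrix.cons_val_three]
      at E0 E1 E2 E3
    have key6 : ∀ (i : Fin 3) (j : Fin 2),
        (t:k) * (c i * d j) = ((s:k) * (t':k)) * (c' i * d' j) := by
      intro i j
      fin_cases i <;> fin_cases j
      · -- (0,0)
        show (t:k) * (c 0 * d 0) = ((s:k) * (t':k)) * (c' 0 * d' 0)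
        apply mul_left_cancel₀ (mul_ne_zero t.ne_zero (mul_ne_zero hc2 hd1))
        linear_combination (-((t:k)*(c 2 * d 0)))*E0 - ((s:k)*(t':k)*(c' 0 * d' 1))*E2
          + ((s:k)*(t':k)*(c' 0 * d' 0))*E3
      · show (t:k) * (c 0 * d 1) = ((s:k) * (t':k)) * (c' 0 * d' 1)
        linear_combination -E0
      · -- (1,0)
        show (t:k) * (c 1 * d 0) = ((s:k) * (t':k)) * (c' 1 * d' 0)
        apply mul_left_cancel₀ (mul_ne_zero t.ne_zero (mul_ne_zero hc2 hd1))
        linear_combination (-((t:k)*(c 2 * d 0)))*E1 - ((s:k)*(t':k)*(c' 1 * d' 1))*E2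
          + ((s:k)*(t':k)*(c' 1 * d' 0))*E3
      · show (t:k) * (c 1 * d 1) = ((s:k) * (t':k)) * (c' 1 * d' 1)
        linear_combination -E1
      · show (t:k) * (c 2 * d 0) = ((s:k) * (t':k)) * (c' 2 * d' 0)
        linear_combination -E2
      · show (t:k) * (c 2 * d 1) = ((s:k) * (t':k)) * (c' 2 * d' 1)
        linear_combination -E3
    have htne : (t:k) ≠ 0 := t.ne_zero
    have hveccoord : BW.equivFun (segV k P.rep Q.rep)
        = ((t:k)⁻¹ * ((s:k) * (t':k))) • BW.equivFun (segV k P'.rep Q'.rep) := by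
      rw [keyW, keyW]
      funext p
      have hk := key6 p.1 p.2
      simp only [hcdef, hddef, hcdef', hddef', Module.Basis.equivFun_apply] at hk
      simp only [Pi.smul_apply, smul_eq_mul, Module.Basis.equivFun_apply]
      field_simp
      linear_combination hk
    have hvec : segV k P.rep Q.rep
        = ((t:k)⁻¹ * ((s:k) * (t':k))) • segV k P'.rep Q'.rep := by
      apply BW.equivFun.injective
      rw [map_smul, hveccoord]
    show segre k P Q = segre k P' Q'
    unfold segre
    rw [Projectivization.mk_eq_mk_iff']
    exact ⟨(t:k)⁻¹ * ((s:k) * (t':k)), hvec.symm⟩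
  · -- SurjOn
    rintro q ⟨-, hq⟩
    simp only [Set.mem_setOf_eq] at hq
    rw [hg0'] at hq
    set w := Bu.equivFun q.rep with hw
    set c : Fin 3 → k := ![w 0, w 1, w 3] with hc
    set d : Fin 2 → k := ![w 2, w 3] with hd
    have hx : B1.equivFun.symm c ≠ 0 := by
      intro h0
      apply hq
      have hc0 : c = 0 := by
        have h1 := congrArg B1.equivFun h0
        rwa [LinearEquiv.apply_symm_apply, map_zero] at h1
      have h2 := congrFun hc0 2
      simpa [hc] using h2
    have hy : B2.equivFun.symm d ≠ 0 := by
      intro h0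
      apply hq
      have hd0 : d = 0 := by
        have h1 := congrArg B2.equivFun h0
        rwa [LinearEquiv.apply_symm_apply, map_zero] at h1
      have h2 := congrFun hd0 1
      simpa [hd] using h2
    set P := Projectivization.mk k (B1.equivFun.symm c) hx with hP
    set Q := Projectivization.mk k (B2.equivFun.symm d) hy with hQ
    obtain ⟨s1, hs1⟩ := exists_smul_eq_mk_rep k (B1.equivFun.symm c) hx
    obtain ⟨s2, hs2⟩ := exists_smul_eq_mk_rep k (B2.equivFun.symm d) hy
    have hcP : B1.equivFun P.rep = (s1:k) • c := by
      rw [hP, ← hs1, Units.smul_def, map_smul, LinearEquiv.apply_symm_apply]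
    have hcQ : B2.equivFun Q.rep = (s2:k) • d := by
      rw [hQ, ← hs2, Units.smul_def, map_smul, LinearEquiv.apply_symm_apply]
    obtain ⟨t, ht⟩ := hrep P Q
    have e1 : c 2 = w 3 := by simp [hc]
    have e2 : d 1 = w 3 := by simp [hd]
    have hz2 : B1.equivFun P.rep 2 * B2.equivFun Q.rep 1 ≠ 0 := by
      rw [hcP, hcQ]
      simp only [Pi.smul_apply, smul_eq_mul, e1, e2]
      exact mul_ne_zero (mul_ne_zero s1.ne_zero hq) (mul_ne_zero s2.ne_zero hq)
    refine ⟨segre k P Q, ⟨⟨P, Q, rfl⟩, ?_⟩, ?_⟩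
    · intro hbad
      simp only [Set.mem_setOf_eq] at hbad
      rw [memZ] at hbad
      exact hz2 hbad
    · have hcoord : Bu.equivFun (π (segre k P Q).rep)
          = ((t:k) * ((s1:k) * (s2:k) * w 3)) • w := by
        rw [ht, map_smul, keyU, map_smul, LinearEquiv.apply_symm_apply, hcP, hcQ]
        funext r
        fin_cases r <;> simp [hc, hd] <;> ring
      have hne : π (segre k P Q).rep ≠ 0 := by
        intro h0
        rw [h0, map_zero] at hcoord
        have h3v := congrFun hcoord 3
        simp only [Pi.zero_apply, Pi.smul_apply, smul_eq_mul] at h3v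
        exact (mul_ne_zero (mul_ne_zero t.ne_zero
          (mul_ne_zero (mul_ne_zero s1.ne_zero s2.ne_zero) hq)) hq) h3v.symm
      have himg : projFrom k π (segre k P Q)
          = Projectivization.mk k (π (segre k P Q).rep) hne := by
        simp only [projFrom]; rw [dif_pos hne]
      have hvec : π (segre k P Q).rep = ((t:k) * ((s1:k) * (s2:k) * w 3)) • q.rep := by
        apply Bu.equivFun.injective
        rw [map_smul, hcoord, hw]
      rw [himg]
      conv_rhs => rw [← Projectivization.mk_rep q]
      rw [Projectivization.mk_eq_mk_iff']
      exact ⟨(t:k) * ((s1:k) * (s2:k) * w 3), hvec.symm⟩
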